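/- Let A be a set of letters, Γℓ and Γr two disjoint finite subsets of A, and c : Γℓ × Γr → A an injective map whose values lie outside Γℓ ∪ Γr. Then for every word w ∈ A*, the (Γℓ,Γr)-pair compression PC(w) contains no two-letter factor ab with a ∈ Γℓ and b ∈ Γr. -/

import Mathlib

/-- The (Γℓ,Γr)-pair compression of a word: every occurrence of a two-letter
factor `a b` with `a ∈ Gl` and `b ∈ Gr` is replaced by the single letter `c a b`,
proceeding from left to right. -/
def PC {A : Type*} [DecidableEq A] (Gl Gr : Finset A) (c : A → A → A) : List A → List A
  | [] => []
  | [a] => [a]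
  | a :: b :: w =>
    if a ∈ Gl ∧ b ∈ Gr then c a b :: PC Gl Gr c w
    else a :: PC Gl Gr c (b :: w)

lemma PC_head {A : Type*} [DecidableEq A] (Gl Gr : Finset A) (c : A → A → A)
    (b : A) (w : List A) :
    (PC Gl Gr c (b :: w)).head? = some b ∨
      ∃ b', b ∈ Gl ∧ b' ∈ Gr ∧ (PC Gl Gr c (b :: w)).head? = some (c b b') := by
  cases w with
  | nil => left; rfl
  | cons b' w' =>
    by_cases h : b ∈ Gl ∧ b' ∈ Gr
    · right; exact ⟨b', h.1, h.2, by simp [PC, h]⟩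
    · left; simp [PC, h]

theorem stmt2 {A : Type*} [DecidableEq A] (Gl Gr : Finset A) (hdisj : Disjoint Gl Gr)
    (c : A → A → A)
    (hc_fresh : ∀ a ∈ Gl, ∀ b ∈ Gr, c a b ∉ Gl ∪ Gr)
    (hc_inj : ∀ a ∈ Gl, ∀ b ∈ Gr, ∀ a' ∈ Gl, ∀ b' ∈ Gr,
      c a b = c a' b' → a = a' ∧ b = b')
    (w : List A) :
    (PC Gl Gr c w).Chain' (fun a b => ¬(a ∈ Gl ∧ b ∈ Gr)) := by
  induction w using PC.induct Gl Gr with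
  | case1 => simp [PC, List.Chain', List.isChain_nil]
  | case2 a => simp [PC, List.Chain', List.isChain_singleton]
  | case3 a b w h ih =>
    rw [PC, if_pos h]
    simp only [List.Chain']; rw [List.isChain_cons]
    refine ⟨?_, ih⟩
    intro y _ hy
    exact hc_fresh a h.1 b h.2 (Finset.mem_union_left _ hy.1)
  | case4 a b w h ih =>
    rw [PC, if_neg h]
    simp only [List.Chain']; rw [List.isChain_cons]
    refine ⟨?_, ih⟩
    intro y hy hay
    rcases PC_head Gl Gr c b w with h1 | ⟨b', hbGl, hb'Gr, h1⟩
    · rw [h1] at hy; injection hy with hy; subst hy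
      exact h hay
    · rw [h1] at hy; injection hy with hy; subst hy
      exact hc_fresh b hbGl b' hb'Gr (Finset.mem_union_right _ hay.2)
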